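/- Let θ, β satisfy 0 < θ ≤ β ≤ √θ < 1, M ∈ R^{m×n}, and L ∈ R^{m×m}, R ∈ R^{n×n} symmetric positive definite with M Mᵀ ⪯ 4L and Mᵀ M ⪯ 4R. Then for any p,q > 0 with 1/p + 1/q = 1, ‖L^{−1/(2p)} M R^{−1/(2q)}‖_op ≤ 2. -/

import Mathlib

open Matrix BigOperators

noncomputable section

namespace Paper

/-- Matrix real power of a symmetric matrix via spectral decomposition
(junk value `0` if the matrix is not hermitian). -/
def mrpow {m : ℕ} (X : Matrix (Fin m) (Fin m) ℝ) (t : ℝ) : Matrix (Fin m) (Fin m) ℝ :=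
  if h : X.IsHermitian then
    (Matrix.IsHermitian.eigenvectorUnitary h : Matrix (Fin m) (Fin m) ℝ) *
      Matrix.diagonal (fun i => (h.eigenvalues i) ^ t) *
      star (Matrix.IsHermitian.eigenvectorUnitary h : Matrix (Fin m) (Fin m) ℝ)
  else 0

/-- Singular values of a rectangular real matrix, as the square roots of the
eigenvalues of `Aᴴ * A` (listed with multiplicity, indexed by `Fin n`). -/
def singVals {m n : ℕ} (A : Matrix (Fin m) (Fin n) ℝ) : Fin n → ℝ :=
  fun i => Real.sqrt ((Matrix.isHermitian_conjTranspose_mul_self A).eigenvalues i)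

/-- Nuclear norm: sum of singular values. -/
def nuclearNorm {m n : ℕ} (A : Matrix (Fin m) (Fin n) ℝ) : ℝ :=
  ∑ i, singVals A i

/-- Frobenius norm. -/
def frobNorm {m n : ℕ} (A : Matrix (Fin m) (Fin n) ℝ) : ℝ :=
  Real.sqrt ((Aᴴ * A).trace)

/-- Spectral norm: largest singular value. -/
def opNorm {m n : ℕ} (A : Matrix (Fin m) (Fin n) ℝ) : ℝ :=
  ⨆ i, singVals A i

/-- Schatten-`p` norm for finite `p`. -/
def schattenNorm {m n : ℕ} (p : ℝ) (A : Matrix (Fin m) (Fin n) ℝ) : ℝ :=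
  (∑ i, (singVals A i) ^ p) ^ (1 / p)

variable {k l : ℕ}

lemma dot_nonneg (x : Fin k → ℝ) : 0 ≤ x ⬝ᵥ x :=
  Finset.sum_nonneg fun i _ => mul_self_nonneg _

lemma dot_pos {x : Fin k → ℝ} (hx : x ≠ 0) : 0 < x ⬝ᵥ x :=
  lt_of_le_of_ne (dot_nonneg x) fun h => hx (dotProduct_self_eq_zero.mp h.symm)

lemma dot_CS (x y : Fin k → ℝ) : (x ⬝ᵥ y)^2 ≤ (x ⬝ᵥ x) * (y ⬝ᵥ y) := by
  simpa [dotProduct, sq] using Finset.sum_mul_sq_le_sq_mul_sq Finset.univ x y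

lemma adj (A : Matrix (Fin k) (Fin l) ℝ) (x : Fin k → ℝ) (z : Fin l → ℝ) :
    (Aᴴ *ᵥ x) ⬝ᵥ z = x ⬝ᵥ (A *ᵥ z) := by
  rw [conjTranspose_eq_transpose_of_trivial, mulVec_transpose, dotProduct_mulVec]

lemma adj' (A : Matrix (Fin k) (Fin l) ℝ) (x : Fin l → ℝ) (z : Fin k → ℝ) :
    (A *ᵥ x) ⬝ᵥ z = x ⬝ᵥ (Aᴴ *ᵥ z) := by
  simpa using adj Aᴴ x z

lemma unitary_dot {U : Matrix (Fin k) (Fin k) ℝ} (hU : U ∈ Matrix.unitaryGroup (Fin k) ℝ)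
    (x : Fin k → ℝ) : (U *ᵥ x) ⬝ᵥ (U *ᵥ x) = x ⬝ᵥ x := by
  rw [adj' U x (U *ᵥ x), mulVec_mulVec, ← star_eq_conjTranspose,
    (Matrix.mem_unitaryGroup_iff'.mp hU), one_mulVec]

lemma basisvec_dot {H : Matrix (Fin k) (Fin k) ℝ} (hH : H.IsHermitian) (i : Fin k) :
    (hH.eigenvectorBasis i : Fin k → ℝ) ⬝ᵥ (hH.eigenvectorBasis i : Fin k → ℝ) = 1 := by
  have h1 : ‖hH.eigenvectorBasis i‖ = 1 := hH.eigenvectorBasis.orthonormal.1 i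
  have := EuclideanSpace.norm_eq (hH.eigenvectorBasis i)
  rw [h1] at this
  have h2 : Real.sqrt (∑ j, ((hH.eigenvectorBasis i : Fin k → ℝ) j)^2) = 1 := by
    simpa [Real.norm_eq_abs, sq_abs] using this.symm
  have h3 := congrArg (· ^ 2) h2
  simp only [Real.sq_sqrt (Finset.sum_nonneg fun j _ => sq_nonneg _), one_pow] at h3
  simpa [dotProduct, sq] using h3

lemma basisvec_ne_zero {H : Matrix (Fin k) (Fin k) ℝ} (hH : H.IsHermitian) (i : Fin k) :
    (hH.eigenvectorBasis i : Fin k → ℝ) ≠ 0 := by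
  intro h
  have := basisvec_dot hH i
  rw [h] at this
  simp at this

lemma herm_quad_le {H : Matrix (Fin k) (Fin k) ℝ} (hH : H.IsHermitian) {c : ℝ} :
    (∀ i, hH.eigenvalues i ≤ c) ↔ ∀ x, x ⬝ᵥ (H *ᵥ x) ≤ c * (x ⬝ᵥ x) := by
  constructor
  · intro h x
    set U : Matrix (Fin k) (Fin k) ℝ := (hH.eigenvectorUnitary : Matrix (Fin k) (Fin k) ℝ)
    have hU : U ∈ Matrix.unitaryGroup (Fin k) ℝ := (hH.eigenvectorUnitary).2
    have hspec : H = U * (Matrix.diagonal hH.eigenvalues) * Uᴴ := by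
      have := hH.spectral_theorem
      simpa [U, RCLike.ofReal_real_eq_id, star_eq_conjTranspose] using this
    set y : Fin k → ℝ := Uᴴ *ᵥ x with hy
    have hU' : Uᴴ ∈ Matrix.unitaryGroup (Fin k) ℝ := by
      rw [← star_eq_conjTranspose]; exact Unitary.star_mem hU
    have hyy : y ⬝ᵥ y = x ⬝ᵥ x := unitary_dot hU' x
    have hxHx : x ⬝ᵥ (H *ᵥ x) = y ⬝ᵥ (Matrix.diagonal hH.eigenvalues *ᵥ y) := by
      conv_lhs => rw [hspec]
      rw [← mulVec_mulVec, ← mulVec_mulVec, ← adj U x]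
    rw [hxHx, ← hyy]
    have : y ⬝ᵥ (Matrix.diagonal hH.eigenvalues *ᵥ y) = ∑ i, hH.eigenvalues i * (y i)^2 := by
      simp only [dotProduct, mulVec_diagonal]
      exact Finset.sum_congr rfl fun i _ => by ring
    rw [this]
    have : c * (y ⬝ᵥ y) = ∑ i, c * (y i)^2 := by
      simp [dotProduct, Finset.mul_sum, sq]
    rw [this]
    exact Finset.sum_le_sum fun i _ => mul_le_mul_of_nonneg_right (h i) (sq_nonneg _)
  · intro h i
    have hv : H *ᵥ (hH.eigenvectorBasis i : Fin k → ℝ)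
        = hH.eigenvalues i • (hH.eigenvectorBasis i : Fin k → ℝ) :=
      hH.mulVec_eigenvectorBasis i
    have h1 := h (hH.eigenvectorBasis i : Fin k → ℝ)
    rw [hv] at h1
    rw [dotProduct_smul, smul_eq_mul, basisvec_dot hH i] at h1
    simpa using h1


variable {m n : ℕ}

lemma nu_nonneg (A : Matrix (Fin m) (Fin n) ℝ) : 0 ≤ opNorm A := by
  rcases isEmpty_or_nonempty (Fin n) with h | h
  · simp [opNorm, Real.iSup_of_isEmpty]
  · exact le_ciSup_of_le (Set.Finite.bddAbove (Set.finite_range _))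
      (Classical.arbitrary _) (Real.sqrt_nonneg _)

lemma nu_le_iff {A : Matrix (Fin m) (Fin n) ℝ} {c : ℝ} (hc : 0 ≤ c) :
    opNorm A ≤ c ↔ ∀ x : Fin n → ℝ, (A *ᵥ x) ⬝ᵥ (A *ᵥ x) ≤ c^2 * (x ⬝ᵥ x) := by
  have e1 : ∀ x : Fin n → ℝ, x ⬝ᵥ ((Aᴴ * A) *ᵥ x) = (A *ᵥ x) ⬝ᵥ (A *ᵥ x) := fun x => by
    rw [← mulVec_mulVec, ← adj' A x]
  have key : (∀ i, singVals A i ≤ c) ↔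
      ∀ x : Fin n → ℝ, (A *ᵥ x) ⬝ᵥ (A *ᵥ x) ≤ c^2 * (x ⬝ᵥ x) := by
    have e2 : (∀ i, singVals A i ≤ c) ↔
        (∀ i, (Matrix.isHermitian_conjTranspose_mul_self A).eigenvalues i ≤ c^2) := by
      constructor
      · intro h i
        have := h i
        rw [singVals, Real.sqrt_le_iff] at this
        exact this.2
      · intro h i
        rw [singVals]
        calc Real.sqrt _ ≤ Real.sqrt (c^2) := Real.sqrt_le_sqrt (h i)
        _ = c := by rw [Real.sqrt_sq hc]
    rw [e2, herm_quad_le (Matrix.isHermitian_conjTranspose_mul_self A)]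
    constructor
    · intro h x; have := h x; rwa [e1 x] at this
    · intro h x; have := h x; rwa [← e1 x] at this
  constructor
  · intro h
    refine key.mp (fun i => ?_)
    exact le_trans (le_ciSup (Set.Finite.bddAbove (Set.finite_range _)) i) h
  · intro h
    rcases isEmpty_or_nonempty (Fin n) with hn | hn
    · simpa [opNorm, Real.iSup_of_isEmpty] using hc
    · exact ciSup_le (key.mpr h)

lemma nu_bound (A : Matrix (Fin m) (Fin n) ℝ) (x : Fin n → ℝ) :
    (A *ᵥ x) ⬝ᵥ (A *ᵥ x) ≤ (opNorm A)^2 * (x ⬝ᵥ x) :=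
  ((nu_le_iff (nu_nonneg A)).mp le_rfl) x

lemma nu_mul_le (A : Matrix (Fin m) (Fin n) ℝ) (B : Matrix (Fin n) (Fin l) ℝ) :
    opNorm (A * B) ≤ opNorm A * opNorm B := by
  rw [nu_le_iff (mul_nonneg (nu_nonneg A) (nu_nonneg B))]
  intro x
  rw [← mulVec_mulVec]
  calc (A *ᵥ (B *ᵥ x)) ⬝ᵥ (A *ᵥ (B *ᵥ x)) ≤ (opNorm A)^2 * ((B *ᵥ x) ⬝ᵥ (B *ᵥ x)) :=
        nu_bound A _
    _ ≤ (opNorm A)^2 * ((opNorm B)^2 * (x ⬝ᵥ x)) :=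
        mul_le_mul_of_nonneg_left (nu_bound B x) (sq_nonneg _)
    _ = (opNorm A * opNorm B)^2 * (x ⬝ᵥ x) := by ring

lemma nu_transpose_le (A : Matrix (Fin m) (Fin n) ℝ) : opNorm Aᴴ ≤ opNorm A := by
  rw [nu_le_iff (nu_nonneg A)]
  intro x
  set y := Aᴴ *ᵥ x with hy
  have h1 : y ⬝ᵥ y = x ⬝ᵥ (A *ᵥ y) := adj A x y
  have h2 := dot_CS x (A *ᵥ y)
  have h3 := nu_bound A y
  rcases (dot_nonneg y).eq_or_lt with h0 | h0
  · rw [← h0]; exact mul_nonneg (sq_nonneg _) (dot_nonneg x)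
  · have key : (y ⬝ᵥ y) * (y ⬝ᵥ y) ≤ ((opNorm A)^2 * (x ⬝ᵥ x)) * (y ⬝ᵥ y) := by
      calc (y ⬝ᵥ y) * (y ⬝ᵥ y) = (x ⬝ᵥ (A *ᵥ y))^2 := by rw [← h1]; ring
        _ ≤ (x ⬝ᵥ x) * ((A *ᵥ y) ⬝ᵥ (A *ᵥ y)) := h2
        _ ≤ (x ⬝ᵥ x) * ((opNorm A)^2 * (y ⬝ᵥ y)) :=
            mul_le_mul_of_nonneg_left h3 (dot_nonneg x)
        _ = ((opNorm A)^2 * (x ⬝ᵥ x)) * (y ⬝ᵥ y) := by ring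
    exact le_of_mul_le_mul_right key h0

lemma nu_transpose (A : Matrix (Fin m) (Fin n) ℝ) : opNorm Aᴴ = opNorm A :=
  le_antisymm (nu_transpose_le A) (by simpa using nu_transpose_le Aᴴ)

lemma nu_cstar (A : Matrix (Fin m) (Fin n) ℝ) : opNorm (Aᴴ * A) = (opNorm A)^2 := by
  refine le_antisymm ?_ ?_
  · calc opNorm (Aᴴ * A) ≤ opNorm Aᴴ * opNorm A := nu_mul_le _ _
      _ = (opNorm A)^2 := by rw [nu_transpose]; ring
  · have h : opNorm A ≤ Real.sqrt (opNorm (Aᴴ * A)) := by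
      rw [nu_le_iff (Real.sqrt_nonneg _)]
      intro x
      have h1 : (A *ᵥ x) ⬝ᵥ (A *ᵥ x) = x ⬝ᵥ ((Aᴴ * A) *ᵥ x) := by
        rw [← mulVec_mulVec, ← adj' A x]
      have h2 := dot_CS x ((Aᴴ * A) *ᵥ x)
      have h3 := nu_bound (Aᴴ * A) x
      rw [Real.sq_sqrt (nu_nonneg (Aᴴ * A))]
      have h4 : ((A *ᵥ x) ⬝ᵥ (A *ᵥ x))^2 ≤ (opNorm (Aᴴ * A) * (x ⬝ᵥ x))^2 := by
        calc ((A *ᵥ x) ⬝ᵥ (A *ᵥ x))^2 = (x ⬝ᵥ ((Aᴴ * A) *ᵥ x))^2 := by rw [h1]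
          _ ≤ (x ⬝ᵥ x) * (((Aᴴ * A) *ᵥ x) ⬝ᵥ ((Aᴴ * A) *ᵥ x)) := h2
          _ ≤ (x ⬝ᵥ x) * ((opNorm (Aᴴ * A))^2 * (x ⬝ᵥ x)) :=
              mul_le_mul_of_nonneg_left h3 (dot_nonneg x)
          _ = (opNorm (Aᴴ * A) * (x ⬝ᵥ x))^2 := by ring
      nlinarith [h4, dot_nonneg (A *ᵥ x),
        mul_nonneg (nu_nonneg (Aᴴ * A)) (dot_nonneg x)]
    calc (opNorm A)^2 ≤ (Real.sqrt (opNorm (Aᴴ * A)))^2 :=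
        pow_le_pow_left₀ (nu_nonneg A) h 2
      _ = opNorm (Aᴴ * A) := Real.sq_sqrt (nu_nonneg _)

lemma nu_diag_ge {k : ℕ} (g : Fin k → ℝ) (i : Fin k) : |g i| ≤ opNorm (Matrix.diagonal g) := by
  have h := nu_bound (Matrix.diagonal g) (Pi.single i 1)
  rw [diagonal_mulVec_single] at h
  have e1 : (Pi.single i (g i * 1) : Fin k → ℝ) ⬝ᵥ Pi.single i (g i * 1) = (g i)^2 := by
    simp [dotProduct, Pi.single_apply, sq]
  have e2 : (Pi.single i 1 : Fin k → ℝ) ⬝ᵥ Pi.single i 1 = 1 := by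
    simp [dotProduct, Pi.single_apply]
  rw [e1, e2, mul_one] at h
  nlinarith [abs_nonneg (g i), sq_abs (g i), nu_nonneg (Matrix.diagonal g)]

lemma nu_diag_le {k : ℕ} {g : Fin k → ℝ} {c : ℝ} (hc : 0 ≤ c) (h : ∀ i, |g i| ≤ c) :
    opNorm (Matrix.diagonal g) ≤ c := by
  rw [nu_le_iff hc]
  intro x
  have e1 : (Matrix.diagonal g *ᵥ x) ⬝ᵥ (Matrix.diagonal g *ᵥ x) = ∑ j, (g j)^2 * (x j)^2 := by
    simp only [dotProduct, mulVec_diagonal]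
    exact Finset.sum_congr rfl fun j _ => by ring
  have e2 : c^2 * (x ⬝ᵥ x) = ∑ j, c^2 * (x j)^2 := by
    simp only [dotProduct, Finset.mul_sum]
    exact Finset.sum_congr rfl fun j _ => by ring
  rw [e1, e2]
  refine Finset.sum_le_sum fun j _ => mul_le_mul_of_nonneg_right ?_ (sq_nonneg _)
  have := h j
  nlinarith [abs_nonneg (g j), sq_abs (g j)]

lemma nu_unitary_mul_le {k : ℕ} {W : Matrix (Fin k) (Fin k) ℝ}
    (hW : W ∈ Matrix.unitaryGroup (Fin k) ℝ) (A : Matrix (Fin k) (Fin n) ℝ) :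
    opNorm (W * A) ≤ opNorm A := by
  rw [nu_le_iff (nu_nonneg A)]
  intro x
  rw [← mulVec_mulVec, unitary_dot hW]
  exact nu_bound A x

lemma nu_unitary_mul {k : ℕ} {W : Matrix (Fin k) (Fin k) ℝ}
    (hW : W ∈ Matrix.unitaryGroup (Fin k) ℝ) (A : Matrix (Fin k) (Fin n) ℝ) :
    opNorm (W * A) = opNorm A := by
  refine le_antisymm (nu_unitary_mul_le hW A) ?_
  have h2 : star W * (W * A) = A := by
    rw [← Matrix.mul_assoc, mem_unitaryGroup_iff'.mp hW, Matrix.one_mul]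
  calc opNorm A = opNorm (star W * (W * A)) := by rw [h2]
    _ ≤ opNorm (W * A) := nu_unitary_mul_le (Unitary.star_mem hW) _

lemma nu_mul_unitary_le {k : ℕ} {W : Matrix (Fin k) (Fin k) ℝ}
    (hW : W ∈ Matrix.unitaryGroup (Fin k) ℝ) (A : Matrix (Fin m) (Fin k) ℝ) :
    opNorm (A * W) ≤ opNorm A := by
  rw [nu_le_iff (nu_nonneg A)]
  intro x
  rw [← mulVec_mulVec]
  calc (A *ᵥ (W *ᵥ x)) ⬝ᵥ (A *ᵥ (W *ᵥ x)) ≤ (opNorm A)^2 * ((W *ᵥ x) ⬝ᵥ (W *ᵥ x)) :=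
      nu_bound A _
    _ = (opNorm A)^2 * (x ⬝ᵥ x) := by rw [unitary_dot hW]

lemma nu_mul_unitary {k : ℕ} {W : Matrix (Fin k) (Fin k) ℝ}
    (hW : W ∈ Matrix.unitaryGroup (Fin k) ℝ) (A : Matrix (Fin m) (Fin k) ℝ) :
    opNorm (A * W) = opNorm A := by
  refine le_antisymm (nu_mul_unitary_le hW A) ?_
  have h2 : (A * W) * star W = A := by
    rw [Matrix.mul_assoc, mem_unitaryGroup_iff.mp hW, Matrix.mul_one]
  calc opNorm A = opNorm ((A * W) * star W) := by rw [h2]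
    _ ≤ opNorm (A * W) := nu_mul_unitary_le (Unitary.star_mem hW) _

lemma nu_pos_of_ne_zero {A : Matrix (Fin m) (Fin n) ℝ} (hA : A ≠ 0) : 0 < opNorm A := by
  rcases (nu_nonneg A).eq_or_lt with h0 | h0
  · exfalso
    apply hA
    ext i j
    have hb := nu_bound A (Pi.single j 1)
    rw [← h0] at hb
    norm_num at hb
    have hz : A *ᵥ Pi.single j 1 = 0 := by
      have h1 := dot_nonneg (A *ᵥ Pi.single j 1)
      have : (A *ᵥ Pi.single j 1) ⬝ᵥ (A *ᵥ Pi.single j 1) = 0 := le_antisymm (by simpa using hb) h1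
      exact dotProduct_self_eq_zero.mp this
    have := congrFun hz i
    rw [mulVec_single] at this
    simpa using this
  · exact h0

lemma eigen_le_nu {k : ℕ} {S : Matrix (Fin k) (Fin k) ℝ} {lam : ℝ} (hl : 0 ≤ lam)
    {v : Fin k → ℝ} (hv : v ≠ 0) (h : S *ᵥ v = lam • v) : lam ≤ opNorm S := by
  have hb := nu_bound S v
  rw [h] at hb
  have e1 : (lam • v) ⬝ᵥ (lam • v) = lam^2 * (v ⬝ᵥ v) := by
    rw [smul_dotProduct, dotProduct_smul]
    simp [smul_eq_mul]; ring
  rw [e1] at hb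
  have h2 : lam^2 ≤ (opNorm S)^2 := le_of_mul_le_mul_right hb (dot_pos hv)
  rw [← Real.sqrt_sq hl, ← Real.sqrt_sq (nu_nonneg S)]
  exact Real.sqrt_le_sqrt h2

lemma psd_nu_eigen {k : ℕ} {X : Matrix (Fin k) (Fin k) ℝ} (hX : X.PosSemidef)
    (hpos : 0 < opNorm X) :
    ∃ v : Fin k → ℝ, v ≠ 0 ∧ X *ᵥ v = opNorm X • v := by
  have hH := hX.1
  rcases isEmpty_or_nonempty (Fin k) with hk | hk
  · exfalso
    rw [show opNorm X = 0 by simp [opNorm, Real.iSup_of_isEmpty]] at hpos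
    exact lt_irrefl _ hpos
  · set U : Matrix (Fin k) (Fin k) ℝ := (hH.eigenvectorUnitary : Matrix (Fin k) (Fin k) ℝ) with hUdef
    have hU : U ∈ Matrix.unitaryGroup (Fin k) ℝ := (hH.eigenvectorUnitary).2
    have hU' : Uᴴ ∈ Matrix.unitaryGroup (Fin k) ℝ := by
      rw [← star_eq_conjTranspose]; exact Unitary.star_mem hU
    have hspec : X = U * (Matrix.diagonal hH.eigenvalues) * Uᴴ := by
      have := hH.spectral_theorem
      simpa [hUdef, RCLike.ofReal_real_eq_id, star_eq_conjTranspose] using this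
    have h1 : opNorm X = opNorm (Matrix.diagonal hH.eigenvalues) := by
      conv_lhs => rw [hspec]
      rw [nu_mul_unitary hU' _, nu_unitary_mul hU _]
    obtain ⟨i0, hi0⟩ := Finite.exists_max hH.eigenvalues
    have hnn : ∀ i, 0 ≤ hH.eigenvalues i := fun i => hX.eigenvalues_nonneg i
    have hle : opNorm (Matrix.diagonal hH.eigenvalues) ≤ hH.eigenvalues i0 :=
      nu_diag_le (hnn i0) (fun i => by rw [abs_of_nonneg (hnn i)]; exact hi0 i)
    have hge : hH.eigenvalues i0 ≤ opNorm (Matrix.diagonal hH.eigenvalues) := by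
      have := nu_diag_ge hH.eigenvalues i0
      rwa [abs_of_nonneg (hnn i0)] at this
    have heq : opNorm X = hH.eigenvalues i0 := by rw [h1]; exact le_antisymm hle hge
    refine ⟨(hH.eigenvectorBasis i0 : Fin k → ℝ), basisvec_ne_zero hH i0, ?_⟩
    rw [heq]
    exact hH.mulVec_eigenvectorBasis i0

lemma psd_form {k : ℕ} {S : Matrix (Fin k) (Fin k) ℝ} {c : ℝ}
    (h : (c • (1 : Matrix (Fin k) (Fin k) ℝ) - S).PosSemidef) (x : Fin k → ℝ) :
    x ⬝ᵥ (S *ᵥ x) ≤ c * (x ⬝ᵥ x) := by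
  have := h.dotProduct_mulVec_nonneg x
  rw [sub_mulVec] at this
  simp only [star_trivial] at this
  rw [dotProduct_sub] at this
  have e1 : x ⬝ᵥ ((c • (1 : Matrix (Fin k) (Fin k) ℝ)) *ᵥ x) = c * (x ⬝ᵥ x) := by
    rw [smul_mulVec, one_mulVec, dotProduct_smul, smul_eq_mul]
  rw [e1] at this
  linarith

lemma nu_le_of_psd_bound {A : Matrix (Fin m) (Fin n) ℝ} {c : ℝ} (hc : 0 ≤ c)
    (h : ((c^2 • (1 : Matrix (Fin n) (Fin n) ℝ)) - Aᴴ * A).PosSemidef) :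
    opNorm A ≤ c := by
  rw [nu_le_iff hc]
  intro x
  have := psd_form h x
  rw [← mulVec_mulVec, ← adj' A x] at this
  exact this

def dpow {k : ℕ} (d : Fin k → ℝ) (t : ℝ) : Matrix (Fin k) (Fin k) ℝ :=
  Matrix.diagonal (fun i => d i ^ t)

lemma dpow_herm {k : ℕ} (d : Fin k → ℝ) (t : ℝ) : (dpow d t)ᴴ = dpow d t := by
  rw [dpow, diagonal_conjTranspose]
  congr 1

lemma dpow_mul_dpow {k : ℕ} {d : Fin k → ℝ} (hd : ∀ i, 0 < d i) (s t : ℝ) :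
    dpow d s * dpow d t = dpow d (s + t) := by
  rw [dpow, dpow, dpow, diagonal_mul_diagonal]
  have : (fun i => d i ^ s * d i ^ t) = fun i => d i ^ (s + t) :=
    funext fun i => (Real.rpow_add (hd i) s t).symm
  rw [this]

lemma dpow_zero {k : ℕ} (d : Fin k → ℝ) : dpow d 0 = 1 := by
  rw [dpow]
  simp [Real.rpow_zero]

section Heinz

variable {d : Fin m → ℝ} {e : Fin n → ℝ} (Y : Matrix (Fin m) (Fin n) ℝ)

lemma heinz_mid (hd : ∀ i, 0 < d i) (he : ∀ j, 0 < e j) (s t : ℝ) :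
    opNorm (dpow d ((s+t)/2) * Y * dpow e (1-(s+t)/2))^2 ≤
      opNorm (dpow d s * Y * dpow e (1-s)) * opNorm (dpow d t * Y * dpow e (1-t)) := by
  set u := (s+t)/2 with hu
  set G := dpow d u * Y * dpow e (1-u) with hG
  rcases (nu_nonneg G).eq_or_lt with h0 | h0
  · rw [← h0]
    simpa using mul_nonneg (nu_nonneg _) (nu_nonneg _)
  · have hX1 : (Gᴴ * G).PosSemidef := Matrix.posSemidef_conjTranspose_mul_self G
    have hnu : opNorm (Gᴴ * G) = (opNorm G)^2 := nu_cstar G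
    have hpos : 0 < opNorm (Gᴴ * G) := by rw [hnu]; positivity
    obtain ⟨v, hv, heig⟩ := psd_nu_eigen hX1 hpos
    set A := dpow e (1-u) * Yᴴ * dpow d t with hA
    set B := dpow d s * Y * dpow e (1-u) with hB
    have hGH : Gᴴ = dpow e (1-u) * Yᴴ * dpow d u := by
      rw [hG, conjTranspose_mul, conjTranspose_mul, dpow_herm, dpow_herm, Matrix.mul_assoc]
    have hmid : ∀ Z : Matrix (Fin m) (Fin n) ℝ,
        dpow d u * (dpow d u * Z) = dpow d t * (dpow d s * Z) := fun Z => by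
      rw [← Matrix.mul_assoc, ← Matrix.mul_assoc, dpow_mul_dpow hd, dpow_mul_dpow hd,
        show u + u = t + s by rw [hu]; ring]
    have hX1eq : Gᴴ * G = A * B := by
      rw [hGH, hG, hA, hB]
      simp only [Matrix.mul_assoc]
      rw [hmid]
    set w := B *ᵥ v with hw
    have hweig : (B * A) *ᵥ w = opNorm (Gᴴ * G) • w := by
      rw [hw, mulVec_mulVec, Matrix.mul_assoc, ← mulVec_mulVec, ← hX1eq, heig, mulVec_smul]
    have hwne : w ≠ 0 := by
      intro hzero
      have h1 : (Gᴴ * G) *ᵥ v = 0 := by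
        rw [hX1eq, ← mulVec_mulVec, ← hw, hzero, mulVec_zero]
      rw [heig] at h1
      exact smul_ne_zero (ne_of_gt hpos) hv h1
    have hle : opNorm (Gᴴ * G) ≤ opNorm (B * A) :=
      eigen_le_nu (le_of_lt hpos) hwne hweig
    have hmid2 : ∀ Z : Matrix (Fin n) (Fin m) ℝ,
        dpow e (1-u) * (dpow e (1-u) * Z) = dpow e (1-s) * (dpow e (1-t) * Z) := fun Z => by
      rw [← Matrix.mul_assoc, ← Matrix.mul_assoc, dpow_mul_dpow he, dpow_mul_dpow he,
        show (1-u) + (1-u) = (1-s) + (1-t) by rw [hu]; ring]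
    have hBA : B * A = (dpow d s * Y * dpow e (1-s)) * (dpow e (1-t) * Yᴴ * dpow d t) := by
      rw [hB, hA]
      simp only [Matrix.mul_assoc]
      rw [hmid2]
    have hfin : opNorm (B * A) ≤
        opNorm (dpow d s * Y * dpow e (1-s)) * opNorm (dpow d t * Y * dpow e (1-t)) := by
      rw [hBA]
      calc opNorm _ ≤ opNorm (dpow d s * Y * dpow e (1-s)) *
            opNorm (dpow e (1-t) * Yᴴ * dpow d t) := nu_mul_le _ _
        _ = opNorm (dpow d s * Y * dpow e (1-s)) *
            opNorm (dpow d t * Y * dpow e (1-t)) := by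
            congr 1
            rw [show dpow e (1-t) * Yᴴ * dpow d t = (dpow d t * Y * dpow e (1-t))ᴴ by
              rw [conjTranspose_mul, conjTranspose_mul, dpow_herm, dpow_herm, Matrix.mul_assoc]]
            exact nu_transpose _
    calc (opNorm G)^2 = opNorm (Gᴴ * G) := hnu.symm
      _ ≤ _ := le_trans hle hfin

lemma nu_zero : opNorm (0 : Matrix (Fin m) (Fin n) ℝ) = 0 := by
  refine le_antisymm ?_ (nu_nonneg _)
  rw [nu_le_iff le_rfl]
  intro x
  simp [zero_mulVec, dot_nonneg x]

lemma continuous_const_rpow {K : ℝ} (hK : 0 < K) : Continuous (fun x : ℝ => K ^ x) := by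
  have : (fun x : ℝ => K ^ x) = fun x => Real.exp (Real.log K * x) :=
    funext fun x => Real.rpow_def_of_pos hK x
  rw [this]
  exact Real.continuous_exp.comp (continuous_const.mul continuous_id)

lemma dpow_nu_le {k : ℕ} {g : Fin k → ℝ} (hg : ∀ i, 0 < g i) {K : ℝ} (hK : 0 < K)
    (hb : ∀ i, g i ≤ K) (hb' : ∀ i, (g i)⁻¹ ≤ K) (s : ℝ) :
    opNorm (dpow g s) ≤ K ^ |s| := by
  refine nu_diag_le (Real.rpow_nonneg hK.le _) (fun i => ?_)
  rw [abs_of_nonneg (Real.rpow_nonneg (hg i).le _)]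
  rcases le_or_gt 0 s with hs | hs
  · rw [abs_of_nonneg hs]
    exact Real.rpow_le_rpow (hg i).le (hb i) hs
  · rw [abs_of_neg hs]
    have e1 : g i ^ s = (g i)⁻¹ ^ (-s) := by
      rw [Real.inv_rpow (hg i).le, ← Real.rpow_neg (hg i).le, neg_neg]
    rw [e1]
    exact Real.rpow_le_rpow (inv_nonneg.mpr (hg i).le) (hb' i) (by linarith)

end Heinz

section Interp

variable {d : Fin m → ℝ} {e : Fin n → ℝ} {Y : Matrix (Fin m) (Fin n) ℝ} {K : ℝ}

lemma F_shift (hd : ∀ i, 0 < d i) (he : ∀ j, 0 < e j) (hK : 0 < K)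
    (hbd : ∀ i, d i ≤ K) (hbd' : ∀ i, (d i)⁻¹ ≤ K)
    (hbe : ∀ j, e j ≤ K) (hbe' : ∀ j, (e j)⁻¹ ≤ K) (t t' : ℝ) :
    opNorm (dpow d t' * Y * dpow e (1-t')) ≤
      K ^ (2 * |t' - t|) * opNorm (dpow d t * Y * dpow e (1-t)) := by
  have h1 : dpow d (t'-t) * dpow d t = dpow d t' := by
    rw [dpow_mul_dpow hd]; ring_nf
  have h2 : dpow e (1-t) * dpow e (t-t') = dpow e (1-t') := by
    rw [dpow_mul_dpow he]; ring_nf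
  have hsplit : dpow d t' * Y * dpow e (1-t') =
      dpow d (t'-t) * ((dpow d t * Y * dpow e (1-t)) * dpow e (t-t')) := by
    rw [← h1, ← h2]
    simp only [Matrix.mul_assoc]
  rw [hsplit]
  have c1 := dpow_nu_le hd hK hbd hbd' (t'-t)
  have c2 := dpow_nu_le he hK hbe hbe' (t-t')
  rw [abs_sub_comm t t'] at c2
  calc opNorm (dpow d (t'-t) * ((dpow d t * Y * dpow e (1-t)) * dpow e (t-t')))
      ≤ opNorm (dpow d (t'-t)) * opNorm ((dpow d t * Y * dpow e (1-t)) * dpow e (t-t')) :=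
        nu_mul_le _ _
    _ ≤ opNorm (dpow d (t'-t)) *
        (opNorm (dpow d t * Y * dpow e (1-t)) * opNorm (dpow e (t-t'))) :=
        mul_le_mul_of_nonneg_left (nu_mul_le _ _) (nu_nonneg _)
    _ ≤ K ^ |t'-t| * (opNorm (dpow d t * Y * dpow e (1-t)) * K ^ |t'-t|) := by
        refine mul_le_mul c1 ?_ (mul_nonneg (nu_nonneg _) (nu_nonneg _))
          (Real.rpow_nonneg hK.le _)
        exact mul_le_mul_of_nonneg_left c2 (nu_nonneg _)
    _ = K ^ (2 * |t' - t|) * opNorm (dpow d t * Y * dpow e (1-t)) := by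
        rw [show (2 : ℝ) * |t' - t| = |t' - t| + |t' - t| by ring, Real.rpow_add hK]
        ring

lemma F_continuous (hd : ∀ i, 0 < d i) (he : ∀ j, 0 < e j) (hK : 0 < K)
    (hbd : ∀ i, d i ≤ K) (hbd' : ∀ i, (d i)⁻¹ ≤ K)
    (hbe : ∀ j, e j ≤ K) (hbe' : ∀ j, (e j)⁻¹ ≤ K) :
    Continuous (fun t : ℝ => opNorm (dpow d t * Y * dpow e (1-t))) := by
  set F : ℝ → ℝ := fun t => opNorm (dpow d t * Y * dpow e (1-t)) with hF
  rw [continuous_iff_continuousAt]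
  intro t
  have hupper : ∀ t', F t' ≤ K ^ (2 * |t' - t|) * F t :=
    fun t' => F_shift hd he hK hbd hbd' hbe hbe' t t'
  have hlower : ∀ t', K ^ (-(2 * |t' - t|)) * F t ≤ F t' := by
    intro t'
    have h := F_shift (Y := Y) hd he hK hbd hbd' hbe hbe' t' t
    rw [abs_sub_comm t t'] at h
    rw [Real.rpow_neg hK.le, inv_mul_le_iff₀ (Real.rpow_pos_of_pos hK _)]
    exact h
  have hcont1 : Continuous (fun t' : ℝ => K ^ (2 * |t' - t|) * F t) :=
    ((continuous_const_rpow hK).comp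
      (continuous_const.mul ((continuous_id.sub continuous_const).abs))).mul continuous_const
  have hcont2 : Continuous (fun t' : ℝ => K ^ (-(2 * |t' - t|)) * F t) :=
    ((continuous_const_rpow hK).comp
      (continuous_const.mul ((continuous_id.sub continuous_const).abs)).neg).mul continuous_const
  have hv1 : Filter.Tendsto (fun t' : ℝ => K ^ (2 * |t' - t|) * F t) (nhds t) (nhds (F t)) := by
    have := hcont1.tendsto t
    simpa using this
  have hv2 : Filter.Tendsto (fun t' : ℝ => K ^ (-(2 * |t' - t|)) * F t) (nhds t) (nhds (F t)) := by
    have := hcont2.tendsto t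
    simpa using this
  exact tendsto_of_tendsto_of_tendsto_of_le_of_le hv2 hv1 hlower hupper

lemma heinz_interp (hd : ∀ i, 0 < d i) (he : ∀ j, 0 < e j)
    {t : ℝ} (ht0 : 0 ≤ t) (ht1 : t ≤ 1) :
    opNorm (dpow d t * Y * dpow e (1-t)) ≤
      opNorm (dpow d 1 * Y) ^ t * opNorm (Y * dpow e 1) ^ (1-t) := by
  rcases eq_or_ne Y 0 with hY | hY
  · subst hY
    simp only [Matrix.mul_zero, Matrix.zero_mul, nu_zero]
    exact mul_nonneg (Real.rpow_nonneg le_rfl _) (Real.rpow_nonneg le_rfl _)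
  · set F : ℝ → ℝ := fun x => opNorm (dpow d x * Y * dpow e (1-x)) with hF
    have hF1 : F 1 = opNorm (dpow d 1 * Y) := by
      show opNorm (dpow d 1 * Y * dpow e (1-1)) = _
      rw [show (1:ℝ)-1 = 0 by ring, dpow_zero, Matrix.mul_one]
    have hF0 : F 0 = opNorm (Y * dpow e 1) := by
      show opNorm (dpow d 0 * Y * dpow e (1-0)) = _
      rw [dpow_zero, Matrix.one_mul, show (1:ℝ)-0 = 1 by ring]
    have hd1 : dpow d (-1) * (dpow d 1 * Y) = Y := by
      rw [← Matrix.mul_assoc, dpow_mul_dpow hd, show (-1:ℝ)+1 = 0 by ring, dpow_zero,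
        Matrix.one_mul]
    have he1 : (Y * dpow e 1) * dpow e (-1) = Y := by
      rw [Matrix.mul_assoc, dpow_mul_dpow he, show (1:ℝ)+(-1) = 0 by ring, dpow_zero,
        Matrix.mul_one]
    have hne1 : dpow d 1 * Y ≠ 0 := fun h => hY (by rw [← hd1, h, Matrix.mul_zero])
    have hne0 : Y * dpow e 1 ≠ 0 := fun h => hY (by rw [← he1, h, Matrix.zero_mul])
    have hpos1 : 0 < F 1 := by rw [hF1]; exact nu_pos_of_ne_zero hne1
    have hpos0 : 0 < F 0 := by rw [hF0]; exact nu_pos_of_ne_zero hne0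
    set K : ℝ := 1 + (∑ i, (d i + (d i)⁻¹)) + (∑ j, (e j + (e j)⁻¹)) with hKdef
    have hsd : ∀ i, 0 ≤ d i + (d i)⁻¹ := fun i => add_nonneg (hd i).le (inv_nonneg.mpr (hd i).le)
    have hse : ∀ j, 0 ≤ e j + (e j)⁻¹ := fun j => add_nonneg (he j).le (inv_nonneg.mpr (he j).le)
    have hsum_d : 0 ≤ ∑ i, (d i + (d i)⁻¹) := Finset.sum_nonneg fun i _ => hsd i
    have hsum_e : 0 ≤ ∑ j, (e j + (e j)⁻¹) := Finset.sum_nonneg fun j _ => hse j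
    have hKpos : 0 < K := by rw [hKdef]; linarith
    have hbd : ∀ i, d i ≤ K := by
      intro i
      have h := Finset.single_le_sum (f := fun i => d i + (d i)⁻¹) (fun i _ => hsd i)
        (Finset.mem_univ i)
      have := inv_nonneg.mpr (hd i).le
      rw [hKdef]; linarith
    have hbd' : ∀ i, (d i)⁻¹ ≤ K := by
      intro i
      have h := Finset.single_le_sum (f := fun i => d i + (d i)⁻¹) (fun i _ => hsd i)
        (Finset.mem_univ i)
      have := (hd i).le
      rw [hKdef]; linarith
    have hbe : ∀ j, e j ≤ K := by
      intro j
      have h := Finset.single_le_sum (f := fun j => e j + (e j)⁻¹) (fun j _ => hse j)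
        (Finset.mem_univ j)
      have := inv_nonneg.mpr (he j).le
      rw [hKdef]; linarith
    have hbe' : ∀ j, (e j)⁻¹ ≤ K := by
      intro j
      have h := Finset.single_le_sum (f := fun j => e j + (e j)⁻¹) (fun j _ => hse j)
        (Finset.mem_univ j)
      have := (he j).le
      rw [hKdef]; linarith
    have hcont : Continuous F := F_continuous (Y := Y) hd he hKpos hbd hbd' hbe hbe'
    set S : Set ℝ := Set.Icc (0:ℝ) 1 ∩ {x | F x ≤ F 1 ^ x * F 0 ^ (1-x)} with hS
    have hclosed : IsClosed S := by
      refine IsClosed.inter isClosed_Icc (isClosed_le hcont ?_)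
      exact (continuous_const_rpow hpos1).mul
        ((continuous_const_rpow hpos0).comp (continuous_const.sub continuous_id))
    have h0S : (0:ℝ) ∈ S :=
      ⟨⟨le_rfl, zero_le_one⟩, by
        simp only [Set.mem_setOf_eq, Real.rpow_zero, sub_zero, Real.rpow_one, one_mul]; exact le_rfl⟩
    have h1S : (1:ℝ) ∈ S :=
      ⟨⟨zero_le_one, le_rfl⟩, by
        simp only [Set.mem_setOf_eq, Real.rpow_one, sub_self, Real.rpow_zero, mul_one]; exact le_rfl⟩
    have hmidS : ∀ x ∈ S, ∀ y ∈ S, ((x+y)/2) ∈ S := by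
      rintro x ⟨⟨hx0, hx1⟩, hx⟩ y ⟨⟨hy0, hy1⟩, hy⟩
      simp only [Set.mem_setOf_eq] at hx hy
      refine ⟨⟨by linarith, by linarith⟩, ?_⟩
      simp only [Set.mem_setOf_eq]
      have hm := heinz_mid Y hd he x y
      have hchain : F ((x+y)/2)^2 ≤ (F 1 ^ ((x+y)/2) * F 0 ^ (1-(x+y)/2))^2 := by
        calc F ((x+y)/2)^2 ≤ F x * F y := hm
          _ ≤ (F 1 ^ x * F 0 ^ (1-x)) * (F 1 ^ y * F 0 ^ (1-y)) :=
              mul_le_mul hx hy (nu_nonneg _)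
                (mul_nonneg (Real.rpow_nonneg hpos1.le _) (Real.rpow_nonneg hpos0.le _))
          _ = (F 1 ^ ((x+y)/2) * F 0 ^ (1-(x+y)/2))^2 := by
              have e1 : (F 1 ^ ((x+y)/2))^2 = F 1 ^ (x+y) := by
                rw [← Real.rpow_natCast (F 1 ^ ((x+y)/2)) 2, ← Real.rpow_mul hpos1.le,
                  show ((x+y)/2)*((2:ℕ):ℝ) = x + y by push_cast; ring]
              have e2 : (F 0 ^ (1-(x+y)/2))^2 = F 0 ^ ((1-x)+(1-y)) := by
                rw [← Real.rpow_natCast (F 0 ^ (1-(x+y)/2)) 2, ← Real.rpow_mul hpos0.le,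
                  show (1-(x+y)/2)*((2:ℕ):ℝ) = (1-x)+(1-y) by push_cast; ring]
              rw [mul_pow, e1, e2, Real.rpow_add hpos1, Real.rpow_add hpos0]
              ring
      have hmnn : 0 ≤ F 1 ^ ((x+y)/2) * F 0 ^ (1-(x+y)/2) :=
        mul_nonneg (Real.rpow_nonneg hpos1.le _) (Real.rpow_nonneg hpos0.le _)
      calc F ((x+y)/2) = Real.sqrt (F ((x+y)/2)^2) := (Real.sqrt_sq (nu_nonneg _)).symm
        _ ≤ Real.sqrt ((F 1 ^ ((x+y)/2) * F 0 ^ (1-(x+y)/2))^2) := Real.sqrt_le_sqrt hchain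
        _ = F 1 ^ ((x+y)/2) * F 0 ^ (1-(x+y)/2) := Real.sqrt_sq hmnn
    have hdy : ∀ N : ℕ, ∀ k : ℕ, k ≤ 2^N → ((k : ℝ)/(2^N : ℝ)) ∈ S := by
      intro N
      induction N with
      | zero =>
        intro k hk
        interval_cases k
        · simpa using h0S
        · simpa using h1S
      | succ N ih =>
        intro k hk
        have hpow : (2:ℕ)^(N+1) = 2^N * 2 := pow_succ 2 N
        have hpowR : (2:ℝ)^(N+1) = 2^N * 2 := pow_succ 2 N
        have h2N : (0:ℝ) < 2^N := by positivity
        rcases Nat.even_or_odd k with ⟨j, hj⟩ | ⟨j, hj⟩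
        · have hj2 : j ≤ 2^N := by omega
          have hmem := ih j hj2
          have hcast : ((k : ℝ))/(2^(N+1) : ℝ) = (j : ℝ)/(2^N : ℝ) := by
            rw [hj]; push_cast; rw [hpowR]; field_simp; ring
          rwa [hcast]
        · have hj1 : j ≤ 2^N := by omega
          have hj2 : j + 1 ≤ 2^N := by omega
          have hmem := hmidS _ (ih j hj1) _ (ih (j+1) hj2)
          have hcast : ((k : ℝ))/(2^(N+1) : ℝ) =
              (((j:ℝ)/(2^N : ℝ)) + (((j+1 : ℕ):ℝ)/(2^N : ℝ)))/2 := by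
            rw [hj]; push_cast; rw [hpowR]; field_simp; ring
          rwa [hcast]
    have hmem : ∀ x, x ∈ Set.Icc (0:ℝ) 1 → x ∈ S := by
      rintro x ⟨hx0, hx1⟩
      have hseq : ∀ N : ℕ, ((⌊(2^N : ℝ) * x⌋₊ : ℝ)/(2^N : ℝ)) ∈ S := by
        intro N
        apply hdy
        have h2N : (0:ℝ) < 2^N := by positivity
        have h1 : (2^N : ℝ) * x ≤ ((2^N : ℕ) : ℝ) := by push_cast; nlinarith
        calc ⌊(2^N:ℝ)*x⌋₊ ≤ ⌊((2^N : ℕ) : ℝ)⌋₊ := Nat.floor_mono h1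
          _ = 2^N := Nat.floor_natCast _
      have hlow : ∀ N : ℕ, x - (1/2:ℝ)^N ≤ ((⌊(2^N : ℝ) * x⌋₊ : ℝ)/(2^N : ℝ)) := by
        intro N
        have h2N : (0:ℝ) < 2^N := by positivity
        have h := Nat.lt_floor_add_one ((2^N : ℝ) * x)
        rw [le_div_iff₀ h2N]
        have e1 : (x - (1/2:ℝ)^N) * 2^N = x * 2^N - 1 := by
          rw [div_pow, one_pow]; field_simp
        rw [e1]
        linarith [h]
      have hup : ∀ N : ℕ, ((⌊(2^N : ℝ) * x⌋₊ : ℝ)/(2^N : ℝ)) ≤ x := by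
        intro N
        have h2N : (0:ℝ) < 2^N := by positivity
        have h := Nat.floor_le (by positivity : (0:ℝ) ≤ (2^N : ℝ) * x)
        rw [div_le_iff₀ h2N]
        linarith [h]
      have hlowtend : Filter.Tendsto (fun N : ℕ => x - (1/2:ℝ)^N) Filter.atTop (nhds x) := by
        have := tendsto_const_nhds (x := x) (f := Filter.atTop (α := ℕ)) |>.sub
          (tendsto_pow_atTop_nhds_zero_of_lt_one (by norm_num : (0:ℝ) ≤ 1/2)
            (by norm_num : (1/2:ℝ) < 1))
        simpa using this
      have htend : Filter.Tendsto (fun N : ℕ => ((⌊(2^N : ℝ) * x⌋₊ : ℝ)/(2^N : ℝ)))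
          Filter.atTop (nhds x) :=
        tendsto_of_tendsto_of_tendsto_of_le_of_le hlowtend tendsto_const_nhds hlow hup
      exact hclosed.mem_of_tendsto htend (Filter.Eventually.of_forall hseq)
    have := (hmem t ⟨ht0, ht1⟩).2
    simp only [Set.mem_setOf_eq] at this
    rw [hF1, hF0] at this
    exact this

end Interp
lemma mrpow_eq {k : ℕ} {X : Matrix (Fin k) (Fin k) ℝ} (hX : X.IsHermitian) (t : ℝ) :
    mrpow X t = (hX.eigenvectorUnitary : Matrix (Fin k) (Fin k) ℝ) *
      dpow hX.eigenvalues t * ((hX.eigenvectorUnitary : Matrix (Fin k) (Fin k) ℝ))ᴴ := by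
  rw [mrpow, dif_pos hX, dpow, star_eq_conjTranspose]

lemma spectral_pd {k : ℕ} {X : Matrix (Fin k) (Fin k) ℝ} (hX : X.IsHermitian) :
    X = (hX.eigenvectorUnitary : Matrix (Fin k) (Fin k) ℝ) *
      dpow hX.eigenvalues 1 * ((hX.eigenvectorUnitary : Matrix (Fin k) (Fin k) ℝ))ᴴ := by
  have h := hX.spectral_theorem
  have e1 : dpow hX.eigenvalues 1 = Matrix.diagonal hX.eigenvalues := by
    rw [dpow]
    have : (fun i => hX.eigenvalues i ^ (1:ℝ)) = hX.eigenvalues :=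
      funext fun i => Real.rpow_one _
    rw [this]
  rw [e1, ← star_eq_conjTranspose]
  simpa [RCLike.ofReal_real_eq_id] using h

lemma conj_spectral {k : ℕ} {X : Matrix (Fin k) (Fin k) ℝ} (hX : X.IsHermitian) :
    ((hX.eigenvectorUnitary : Matrix (Fin k) (Fin k) ℝ))ᴴ * X *
      (hX.eigenvectorUnitary : Matrix (Fin k) (Fin k) ℝ) = dpow hX.eigenvalues 1 := by
  set U : Matrix (Fin k) (Fin k) ℝ := (hX.eigenvectorUnitary : Matrix (Fin k) (Fin k) ℝ) with hU
  have hUm : U ∈ Matrix.unitaryGroup (Fin k) ℝ := (hX.eigenvectorUnitary).2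
  have h1 : Uᴴ * U = 1 := by
    rw [← star_eq_conjTranspose]; exact mem_unitaryGroup_iff'.mp hUm
  conv_lhs => rw [spectral_pd hX]
  simp only [Matrix.mul_assoc]
  rw [h1, Matrix.mul_one, ← Matrix.mul_assoc, h1, Matrix.one_mul]


/-- Spectral norm bound on the two-sided preconditioned update:
`‖L^{−1/(2p)} M R^{−1/(2q)}‖_op ≤ 2`. -/
theorem stmt10 {m n : ℕ} {θ β : ℝ} (hθ : 0 < θ) (hθβ : θ ≤ β)
    (hβ : β ≤ Real.sqrt θ) (hβ1 : Real.sqrt θ < 1)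
    (M : Matrix (Fin m) (Fin n) ℝ)
    {L : Matrix (Fin m) (Fin m) ℝ} {R : Matrix (Fin n) (Fin n) ℝ}
    (hL : L.PosDef) (hR : R.PosDef)
    (hML : ((4 : ℝ) • L - M * Mᴴ).PosSemidef)
    (hMR : ((4 : ℝ) • R - Mᴴ * M).PosSemidef)
    {p q : ℝ} (hp : 0 < p) (hq : 0 < q) (hpq : 1 / p + 1 / q = 1) :
    opNorm (mrpow L (-(1 / (2 * p))) * M * mrpow R (-(1 / (2 * q)))) ≤ 2 := by
  have hLh : L.IsHermitian := hL.1
  have hRh : R.IsHermitian := hR.1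
  set d : Fin m → ℝ := hLh.eigenvalues with hd_def
  set e : Fin n → ℝ := hRh.eigenvalues with he_def
  have hd : ∀ i, 0 < d i := fun i => hL.eigenvalues_pos i
  have he : ∀ j, 0 < e j := fun j => hR.eigenvalues_pos j
  set U : Matrix (Fin m) (Fin m) ℝ := (hLh.eigenvectorUnitary : Matrix (Fin m) (Fin m) ℝ)
    with hU_def
  set V : Matrix (Fin n) (Fin n) ℝ := (hRh.eigenvectorUnitary : Matrix (Fin n) (Fin n) ℝ)
    with hV_def
  have hUm : U ∈ Matrix.unitaryGroup (Fin m) ℝ := (hLh.eigenvectorUnitary).2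
  have hVm : V ∈ Matrix.unitaryGroup (Fin n) ℝ := (hRh.eigenvectorUnitary).2
  have hUm' : Uᴴ ∈ Matrix.unitaryGroup (Fin m) ℝ := by
    rw [← star_eq_conjTranspose]; exact Unitary.star_mem hUm
  have hVm' : Vᴴ ∈ Matrix.unitaryGroup (Fin n) ℝ := by
    rw [← star_eq_conjTranspose]; exact Unitary.star_mem hVm
  have hUU : Uᴴ * U = 1 := by rw [← star_eq_conjTranspose]; exact mem_unitaryGroup_iff'.mp hUm
  have hUU' : U * Uᴴ = 1 := by rw [← star_eq_conjTranspose]; exact mem_unitaryGroup_iff.mp hUm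
  have hVV : Vᴴ * V = 1 := by rw [← star_eq_conjTranspose]; exact mem_unitaryGroup_iff'.mp hVm
  have hVV' : V * Vᴴ = 1 := by rw [← star_eq_conjTranspose]; exact mem_unitaryGroup_iff.mp hVm
  set N : Matrix (Fin m) (Fin n) ℝ := Uᴴ * M * V with hN_def
  -- reduce to diagonal form
  have hsplit : mrpow L (-(1 / (2 * p))) * M * mrpow R (-(1 / (2 * q))) =
      U * ((dpow d (-(1 / (2 * p))) * N * dpow e (-(1 / (2 * q)))) * Vᴴ) := by
    rw [mrpow_eq hLh, mrpow_eq hRh, hN_def]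
    simp only [Matrix.mul_assoc, hU_def, hV_def, hd_def, he_def]
  rw [hsplit, nu_unitary_mul hUm, nu_mul_unitary hVm']
  -- set up Heinz
  set d' : Fin m → ℝ := fun i => d i ^ (-(1/2) : ℝ) with hd'_def
  set e' : Fin n → ℝ := fun j => e j ^ (-(1/2) : ℝ) with he'_def
  have hd' : ∀ i, 0 < d' i := fun i => Real.rpow_pos_of_pos (hd i) _
  have he' : ∀ j, 0 < e' j := fun j => Real.rpow_pos_of_pos (he j) _
  set t : ℝ := 1 / p with ht_def
  have ht0 : 0 ≤ t := by positivity
  have hq0 : 0 < 1 / q := by positivity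
  have ht1 : t ≤ 1 := by rw [ht_def]; linarith
  have hqt : 1 - t = 1 / q := by rw [ht_def]; linarith
  have hDl : dpow d (-(1 / (2 * p))) = dpow d' t := by
    rw [dpow, dpow]
    have : (fun i => d i ^ (-(1 / (2 * p)))) = fun i => d' i ^ t := by
      funext i
      show d i ^ (-(1 / (2 * p))) = (d i ^ (-(1/2) : ℝ)) ^ t
      rw [← Real.rpow_mul (hd i).le,
        show (-(1/2) : ℝ) * t = -(1 / (2 * p)) by rw [ht_def]; ring]
    rw [this]
  have hDr : dpow e (-(1 / (2 * q))) = dpow e' (1 - t) := by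
    rw [dpow, dpow]
    have : (fun j => e j ^ (-(1 / (2 * q)))) = fun j => e' j ^ (1 - t) := by
      funext j
      show e j ^ (-(1 / (2 * q))) = (e j ^ (-(1/2) : ℝ)) ^ (1 - t)
      rw [← Real.rpow_mul (he j).le, hqt,
        show (-(1/2) : ℝ) * (1/q) = -(1 / (2 * q)) by ring]
    rw [this]
  rw [hDl, hDr]
  have hheinz := heinz_interp (Y := N) hd' he' ht0 ht1
  -- bound the two endpoint norms by 2
  have hone_d : dpow d' 1 = dpow d (-(1/2)) := by
    rw [dpow, dpow]
    have : (fun i => d' i ^ (1:ℝ)) = fun i => d i ^ (-(1/2) : ℝ) := by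
      funext i
      show (d i ^ (-(1/2) : ℝ)) ^ (1:ℝ) = _
      rw [Real.rpow_one]
    rw [this]
  have hone_e : dpow e' 1 = dpow e (-(1/2)) := by
    rw [dpow, dpow]
    have : (fun j => e' j ^ (1:ℝ)) = fun j => e j ^ (-(1/2) : ℝ) := by
      funext j
      show (e j ^ (-(1/2) : ℝ)) ^ (1:ℝ) = _
      rw [Real.rpow_one]
    rw [this]
  -- congruence transforms of the hypotheses
  have hLdiag : Uᴴ * ((4 : ℝ) • L - M * Mᴴ) * U =
      (4 : ℝ) • dpow d 1 - N * Nᴴ := by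
    rw [Matrix.mul_sub, Matrix.sub_mul]
    congr 1
    · rw [Matrix.mul_smul, Matrix.smul_mul, conj_spectral hLh]
    · rw [hN_def, conjTranspose_mul, conjTranspose_mul, conjTranspose_conjTranspose]
      simp only [Matrix.mul_assoc]
      rw [← Matrix.mul_assoc V Vᴴ, hVV', Matrix.one_mul]
  have hRdiag : Vᴴ * ((4 : ℝ) • R - Mᴴ * M) * V =
      (4 : ℝ) • dpow e 1 - Nᴴ * N := by
    rw [Matrix.mul_sub, Matrix.sub_mul]
    congr 1
    · rw [Matrix.mul_smul, Matrix.smul_mul, conj_spectral hRh]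
    · rw [hN_def, conjTranspose_mul, conjTranspose_mul, conjTranspose_conjTranspose]
      simp only [Matrix.mul_assoc]
      rw [← Matrix.mul_assoc U Uᴴ, hUU', Matrix.one_mul]
  have hpsdL : ((4 : ℝ) • dpow d 1 - N * Nᴴ).PosSemidef := by
    rw [← hLdiag]
    exact hML.conjTranspose_mul_mul_same U
  have hpsdR : ((4 : ℝ) • dpow e 1 - Nᴴ * N).PosSemidef := by
    rw [← hRdiag]
    exact hMR.conjTranspose_mul_mul_same V
  -- collapse identities
  have hcollapse_d : dpow d (-(1/2)) * dpow d 1 * dpow d (-(1/2)) = 1 := by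
    rw [dpow_mul_dpow hd, dpow_mul_dpow hd, show (-(1/2) : ℝ) + 1 + -(1/2) = 0 by ring,
      dpow_zero]
  have hcollapse_e : dpow e (-(1/2)) * dpow e 1 * dpow e (-(1/2)) = 1 := by
    rw [dpow_mul_dpow he, dpow_mul_dpow he, show (-(1/2) : ℝ) + 1 + -(1/2) = 0 by ring,
      dpow_zero]
  have hboundL : opNorm (dpow d' 1 * N) ≤ 2 := by
    rw [hone_d]
    set X := dpow d (-(1/2)) * N with hX_def
    have hXX : ((2:ℝ)^2 • (1 : Matrix (Fin m) (Fin m) ℝ)) - Xᴴᴴ * Xᴴ =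
        dpow d (-(1/2)) * ((4 : ℝ) • dpow d 1 - N * Nᴴ) * (dpow d (-(1/2)))ᴴ := by
      rw [dpow_herm, conjTranspose_conjTranspose, Matrix.mul_sub, Matrix.sub_mul]
      congr 1
      · rw [Matrix.mul_smul, Matrix.smul_mul, hcollapse_d]
        norm_num
      · rw [hX_def, conjTranspose_mul, dpow_herm]
        simp only [Matrix.mul_assoc]
    have hpsd : (((2:ℝ)^2 • (1 : Matrix (Fin m) (Fin m) ℝ)) - Xᴴᴴ * Xᴴ).PosSemidef := by
      rw [hXX]
      exact hpsdL.mul_mul_conjTranspose_same (dpow d (-(1/2)))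
    have := nu_le_of_psd_bound (by norm_num : (0:ℝ) ≤ 2) hpsd
    rwa [nu_transpose] at this
  have hboundR : opNorm (N * dpow e' 1) ≤ 2 := by
    rw [hone_e]
    set X := N * dpow e (-(1/2)) with hX_def
    have hXX : ((2:ℝ)^2 • (1 : Matrix (Fin n) (Fin n) ℝ)) - Xᴴ * X =
        dpow e (-(1/2)) * ((4 : ℝ) • dpow e 1 - Nᴴ * N) * (dpow e (-(1/2)))ᴴ := by
      rw [dpow_herm, Matrix.mul_sub, Matrix.sub_mul]
      congr 1
      · rw [Matrix.mul_smul, Matrix.smul_mul, hcollapse_e]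
        norm_num
      · rw [hX_def, conjTranspose_mul, dpow_herm]
        simp only [Matrix.mul_assoc]
    have hpsd : (((2:ℝ)^2 • (1 : Matrix (Fin n) (Fin n) ℝ)) - Xᴴ * X).PosSemidef := by
      rw [hXX]
      exact hpsdR.mul_mul_conjTranspose_same (dpow e (-(1/2)))
    exact nu_le_of_psd_bound (by norm_num : (0:ℝ) ≤ 2) hpsd
  -- finish
  calc opNorm (dpow d' t * N * dpow e' (1 - t))
      ≤ opNorm (dpow d' 1 * N) ^ t * opNorm (N * dpow e' 1) ^ (1 - t) := hheinz
    _ ≤ (2:ℝ) ^ t * (2:ℝ) ^ (1 - t) := by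
        refine mul_le_mul (Real.rpow_le_rpow (nu_nonneg _) hboundL ht0)
          (Real.rpow_le_rpow (nu_nonneg _) hboundR (by linarith))
          (Real.rpow_nonneg (nu_nonneg _) _) (Real.rpow_nonneg (by norm_num) _)
    _ = 2 := by
        rw [← Real.rpow_add (by norm_num : (0:ℝ) < 2), add_sub_cancel, Real.rpow_one]


end Paper
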